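/- Let {K_i : i < κ} be an infinite family of κ many compact Hausdorff spaces each with more than one point, and K = ∏_{i<κ} K_i. Then 𝔯(K) ≥ max(κ, sup_{i<κ} 𝔯(K_i)). -/
import Mathlib


universe u

/-- A reaping family in a topological space `K`: a family of nonempty open sets such
that every pair of disjoint closed sets is "reaped" by a member of the family. -/
def IsReapingFamily {K : Type u} [TopologicalSpace K] (F : Set (Set K)) : Prop :=
  (∀ W ∈ F, IsOpen W ∧ W.Nonempty) ∧
    ∀ L₁ L₂ : Set K, IsClosed L₁ → IsClosed L₂ → Disjoint L₁ L₂ →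
      ∃ W ∈ F, W ∩ L₁ = ∅ ∨ W ∩ L₂ = ∅

/-- The reaping number `𝔯(K)`: the least cardinality of a reaping family in `K`. -/
noncomputable def reapingNumber (K : Type u) [TopologicalSpace K] : Cardinal.{u} :=
  ⨅ F : {F : Set (Set K) // IsReapingFamily F}, Cardinal.mk F.1

lemma trivialReaping (K : Type u) [TopologicalSpace K] [Nonempty K] :
    IsReapingFamily {W : Set K | IsOpen W ∧ W.Nonempty} := by
  constructor
  · intro W hW; exact hW
  · intro L₁ L₂ h₁ _ hd
    by_cases hu : L₁ = Set.univ
    · refine ⟨Set.univ, ⟨isOpen_univ, Set.univ_nonempty⟩, Or.inr ?_⟩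
      have : L₂ = ∅ := by
        have := Set.disjoint_iff.mp hd
        subst hu
        simpa using Set.subset_eq_empty (by simpa using this) rfl
      simp [this]
    · refine ⟨L₁ᶜ, ⟨h₁.isOpen_compl, ?_⟩, Or.inl (Set.compl_inter_self _)⟩
      rwa [Set.nonempty_compl]

lemma aux1 {ι : Type u} [Infinite ι] (K : ι → Type u) [∀ i, TopologicalSpace (K i)]
    [∀ i, T1Space (K i)] [∀ i, Nontrivial (K i)]
    {F : Set (Set (∀ i, K i))} (hF : IsReapingFamily F) :
    Cardinal.mk ι ≤ Cardinal.mk F := by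
  classical
  by_contra h
  push_neg at h
  have hbox : ∀ p : F, ∃ (x : ∀ i, K i) (I : Finset ι) (u : ∀ i, Set (K i)),
      (∀ j ∈ I, x j ∈ u j) ∧ (I : Set ι).pi u ⊆ p.1 := by
    rintro ⟨W, hW⟩
    obtain ⟨hWo, x, hx⟩ := hF.1 W hW
    obtain ⟨I, u, hu, hsub⟩ := isOpen_pi_iff.mp hWo x hx
    exact ⟨x, I, u, fun j hj => (hu j hj).2, hsub⟩
  choose x I u hxu hsub using hbox
  set S : Set ι := ⋃ p : F, (I p : Set ι) with hS
  have hScard : Cardinal.mk S < Cardinal.mk ι := by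
    rcases finite_or_infinite F with hfin | hinf
    · have : S.Finite := Set.finite_iUnion (fun p => (I p).finite_toSet)
      calc Cardinal.mk S < Cardinal.aleph0 := Cardinal.lt_aleph0_of_finite S
        _ ≤ Cardinal.mk ι := Cardinal.aleph0_le_mk ι
    · have h1 : Cardinal.mk S ≤ Cardinal.mk F * ⨆ p : F, Cardinal.mk ((I p : Set ι)) :=
        Cardinal.mk_iUnion_le _
      have h2 : (⨆ p : F, Cardinal.mk ((I p : Set ι))) ≤ Cardinal.aleph0 :=
        ciSup_le fun p => le_of_lt (Cardinal.lt_aleph0_of_finite _)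
      have h3 : Cardinal.mk F * Cardinal.aleph0 = Cardinal.mk F := by
        rw [Cardinal.mul_eq_max (Cardinal.aleph0_le_mk F) le_rfl]
        exact max_eq_left (Cardinal.aleph0_le_mk F)
      calc Cardinal.mk S ≤ Cardinal.mk F * ⨆ p : F, Cardinal.mk ((I p : Set ι)) := h1
        _ ≤ Cardinal.mk F * Cardinal.aleph0 := by
            exact mul_le_mul_right h2 _
        _ = Cardinal.mk F := h3
        _ < Cardinal.mk ι := h
  have hSne : S ≠ Set.univ := by
    intro hu
    rw [hu] at hScard
    simp at hScard
  obtain ⟨i, hi⟩ : ∃ i, i ∉ S := by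
    by_contra hc
    push_neg at hc
    exact hSne (Set.eq_univ_of_forall hc)
  obtain ⟨a, b, hab⟩ := exists_pair_ne (K i)
  have hL₁ : IsClosed ((fun f : ∀ j, K j => f i) ⁻¹' {a}) :=
    isClosed_singleton.preimage (continuous_apply i)
  have hL₂ : IsClosed ((fun f : ∀ j, K j => f i) ⁻¹' {b}) :=
    isClosed_singleton.preimage (continuous_apply i)
  have hdis : Disjoint ((fun f : ∀ j, K j => f i) ⁻¹' {a})
      ((fun f : ∀ j, K j => f i) ⁻¹' {b}) := by
    rw [Set.disjoint_left]
    intro f hfa hfb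
    exact hab (by rw [← hfa, ← hfb])
  obtain ⟨W, hW, hcase⟩ := hF.2 _ _ hL₁ hL₂ hdis
  have hiI : i ∉ I ⟨W, hW⟩ := by
    intro hmem
    exact hi (Set.mem_iUnion.mpr ⟨⟨W, hW⟩, hmem⟩)
  have hupd : ∀ c : K i, Function.update (x ⟨W, hW⟩) i c ∈ W := by
    intro c
    apply hsub ⟨W, hW⟩
    intro j hj
    have hji : j ≠ i := fun hji => hiI (hji ▸ hj)
    rw [Function.update_of_ne hji]
    exact hxu ⟨W, hW⟩ j hj
  rcases hcase with hc | hc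
  · have : Function.update (x ⟨W, hW⟩) i a ∈ W ∩ ((fun f : ∀ j, K j => f i) ⁻¹' {a}) :=
      ⟨hupd a, by simp⟩
    rw [hc] at this
    exact this
  · have : Function.update (x ⟨W, hW⟩) i b ∈ W ∩ ((fun f : ∀ j, K j => f i) ⁻¹' {b}) :=
      ⟨hupd b, by simp⟩
    rw [hc] at this
    exact this

lemma aux2 {ι : Type u} (K : ι → Type u) [∀ i, TopologicalSpace (K i)] (i : ι)
    {F : Set (Set (∀ i, K i))} (hF : IsReapingFamily F) :
    reapingNumber (K i) ≤ Cardinal.mk F := by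
  set G : Set (Set (K i)) := (fun W => (fun f : ∀ j, K j => f i) '' W) '' F with hG
  have hGreap : IsReapingFamily G := by
    constructor
    · rintro W' ⟨W, hW, rfl⟩
      obtain ⟨hWo, hWne⟩ := hF.1 W hW
      exact ⟨(isOpenMap_eval i) W hWo, hWne.image _⟩
    · intro L₁ L₂ h₁ h₂ hd
      obtain ⟨W, hW, hcase⟩ := hF.2 ((fun f : ∀ j, K j => f i) ⁻¹' L₁)
        ((fun f : ∀ j, K j => f i) ⁻¹' L₂) (h₁.preimage (continuous_apply i))
        (h₂.preimage (continuous_apply i)) (hd.preimage _)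
      refine ⟨_, ⟨W, hW, rfl⟩, ?_⟩
      rcases hcase with hc | hc
      · left
        ext y
        simp only [Set.mem_inter_iff, Set.mem_image, Set.mem_empty_iff_false, iff_false]
        rintro ⟨⟨f, hf, rfl⟩, hy⟩
        have : f ∈ W ∩ ((fun f : ∀ j, K j => f i) ⁻¹' L₁) := ⟨hf, hy⟩
        rw [hc] at this; exact this
      · right
        ext y
        simp only [Set.mem_inter_iff, Set.mem_image, Set.mem_empty_iff_false, iff_false]
        rintro ⟨⟨f, hf, rfl⟩, hy⟩
        have : f ∈ W ∩ ((fun f : ∀ j, K j => f i) ⁻¹' L₂) := ⟨hf, hy⟩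
        rw [hc] at this; exact this
  calc reapingNumber (K i) ≤ Cardinal.mk G := ciInf_le' _ (⟨G, hGreap⟩ :
        {F : Set (Set (K i)) // IsReapingFamily F})
    _ ≤ Cardinal.mk F := Cardinal.mk_image_le

/-- If `K` is the product of an infinite family of compact Hausdorff spaces each having
more than one point, then `𝔯(K) ≥ max(κ, sup_i 𝔯(K_i))`, where `κ` is the number of
factors. -/
theorem reapingNumber_product_ge {ι : Type u} [Infinite ι] (K : ι → Type u)
    [∀ i, TopologicalSpace (K i)] [∀ i, CompactSpace (K i)] [∀ i, T2Space (K i)]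
    [∀ i, Nontrivial (K i)] :
    max (Cardinal.mk ι) (⨆ i, reapingNumber (K i)) ≤ reapingNumber (∀ i, K i) := by
  haveI : Nonempty (∀ i, K i) := ⟨fun i => Classical.arbitrary _⟩
  haveI hne : Nonempty {F : Set (Set (∀ i, K i)) // IsReapingFamily F} :=
    ⟨⟨_, trivialReaping (∀ i, K i)⟩⟩
  apply max_le
  · exact le_ciInf fun F => aux1 K F.2
  · apply ciSup_le
    intro i
    exact le_ciInf fun F => aux2 K i F.2
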